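/- For the binary sparse in-context regression task with n = k = 1, σ_ε = 0, and single in-context example (x, xᵀw*) with x ~ N(0, I_d), there exists ζ > 0 (depending on the realized data) such that, with probability at least 1 − 1/2^{d-1} over x, for every reasoning length t ≥ 2·log 2 / (−log(1 − ζ)) and all sufficiently large sampling numbers N, the majority-vote prediction satisfies w_{t,N}^{mv} = w*; in particular P( w_{t,N}^{mv} = w* ) ≥ 1 − 1/2^{d-1}. -/

import Mathlib

open Matrix Finset

/-- One gradient step for in-context regression. -/
noncomputable def gradStep {n d : ℕ} (X : Matrix (Fin n) (Fin d) ℝ) (y : Fin n → ℝ)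
    (w : Fin d → ℝ) : Fin d → ℝ :=
  w - (1 / (n : ℝ)) • (Xᵀ.mulVec (X.mulVec w - y))

/-- ClipNorm: clip entries at 0 and normalize to a probability vector. -/
noncomputable def clipNorm {d : ℕ} (v : Fin d → ℝ) : Fin d → ℝ :=
  fun i => max (v i) 0 / ∑ i', max (v i') 0

/-- 0/1 indicator vector of a finset of coordinates. -/
def indicatorVec {d : ℕ} (S : Finset (Fin d)) : Fin d → ℝ := fun i => if i ∈ S then 1 else 0

open scoped Classical in
/-- Probability of obtaining support `S` when sampling `k` distinct indices without
replacement according to the probability vector `q`. -/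
noncomputable def sampleWoR {d : ℕ} (k : ℕ) (q : Fin d → ℝ) (S : Finset (Fin d)) : ℝ :=
  ∑ e : Fin k → Fin d,
    if Function.Injective e ∧ Finset.image e Finset.univ = S then
      ∏ i : Fin k, q (e i) / (1 - ∑ j ∈ Finset.univ.filter (fun j => j < i), q (e j))
    else 0

/-- One-step transition probability of the sampling-decoding chain. -/
noncomputable def transProb {n d : ℕ} (X : Matrix (Fin n) (Fin d) ℝ) (y : Fin n → ℝ)
    (k : ℕ) (S S' : Finset (Fin d)) : ℝ :=
  sampleWoR k (clipNorm (gradStep X y (indicatorVec S))) S'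

/-- Distribution of the sampling-decoding chain after `t` steps, started at `w₀ = 0`. -/
noncomputable def chainProb {n d : ℕ} (X : Matrix (Fin n) (Fin d) ℝ) (y : Fin n → ℝ)
    (k : ℕ) : ℕ → Finset (Fin d) → ℝ
  | 0, S => if S = ∅ then 1 else 0
  | t + 1, S => ∑ S' : Finset (Fin d), chainProb X y k t S' * transProb X y k S' S

/-- `S` consists of `k` indices carrying the `k` largest values of `q`. -/
def IsTopK {d : ℕ} (k : ℕ) (q : Fin d → ℝ) (S : Finset (Fin d)) : Prop :=
  S.card = k ∧ ∀ i ∈ S, ∀ j ∉ S, q j ≤ q i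

/-- Greedy-decoding iterates, with a tie-breaking top-k selector `sel`. -/
noncomputable def greedyIter {n d : ℕ} (X : Matrix (Fin n) (Fin d) ℝ) (y : Fin n → ℝ)
    (k : ℕ) (sel : (Fin d → ℝ) → Finset (Fin d)) : ℕ → Finset (Fin d)
  | 0 => ∅
  | t + 1 => sel (clipNorm (gradStep X y (indicatorVec (greedyIter X y k sel t))))

/-- Number of votes for `S` among the `N` sampled reasoning outcomes `g`. -/
def countVotes {d : ℕ} {N : ℕ} (g : Fin N → Finset (Fin d)) (S : Finset (Fin d)) : ℕ :=
  (Finset.univ.filter fun j => g j = S).card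

open scoped Classical in
/-- Probability that the majority-vote selector `vote` applied to `N` i.i.d. samples from
the distribution `f` on supports returns `Sstar`. -/
noncomputable def mvRecoverProb {d : ℕ} (f : Finset (Fin d) → ℝ) (N : ℕ)
    (vote : (Fin N → Finset (Fin d)) → Finset (Fin d)) (Sstar : Finset (Fin d)) : ℝ :=
  ∑ g : Fin N → Finset (Fin d), (∏ j, f (g j)) * (if vote g = Sstar then 1 else 0)

open MeasureTheory ProbabilityTheory
open scoped ENNReal

namespace Stmt11Aux

variable {d : ℕ}

lemma sampleWoR_one (q : Fin d → ℝ) (S : Finset (Fin d)) :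
    sampleWoR 1 q S = ∑ i : Fin d, if ({i} : Finset (Fin d)) = S then q i else 0 := by
  classical
  rw [sampleWoR]
  rw [← (Equiv.funUnique (Fin 1) (Fin d)).symm.sum_comp]
  refine Finset.sum_congr rfl fun i _ => ?_
  have hinj : Function.Injective ((Equiv.funUnique (Fin 1) (Fin d)).symm i) :=
    Function.injective_of_subsingleton _
  have himg : Finset.image ((Equiv.funUnique (Fin 1) (Fin d)).symm i) Finset.univ = {i} := by
    simp [Equiv.funUnique]
  have hfilter : (Finset.univ.filter (fun j : Fin 1 => j < (0 : Fin 1))) = ∅ := by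
    decide
  simp only [hinj, himg, true_and, Fin.prod_univ_one]
  by_cases h : ({i} : Finset (Fin d)) = S
  · simp [h, hfilter, Equiv.funUnique]
  · simp [h]

/-- explicit gradient step vector from support `S`. -/
noncomputable def gs (x : Fin d → ℝ) (istar : Fin d) (S : Finset (Fin d)) : Fin d → ℝ :=
  fun i => (if i ∈ S then 1 else 0) + x i * (x istar - ∑ j ∈ S, x j)

lemma gradStep_eq (x : Fin d → ℝ) (istar : Fin d) (S : Finset (Fin d)) :
    gradStep (Matrix.of fun _ : Fin 1 => x) (fun _ => x istar) (indicatorVec S) =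
      gs x istar S := by
  classical
  funext i
  simp only [gradStep, gs, Pi.sub_apply, Pi.smul_apply, smul_eq_mul, Nat.cast_one]
  have h1 : (Matrix.of fun _ : Fin 1 => x).mulVec (indicatorVec S) =
      fun _ => ∑ j ∈ S, x j := by
    funext k
    simp only [Matrix.mulVec, Matrix.of_apply, dotProduct, indicatorVec, mul_ite, mul_one,
      mul_zero]
    rw [Finset.sum_ite_mem, Finset.univ_inter]
  rw [h1]
  have h2 : ((Matrix.of fun _ : Fin 1 => x)ᵀ.mulVec
      ((fun _ : Fin 1 => ∑ j ∈ S, x j) - fun _ => x istar)) i =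
      x i * ((∑ j ∈ S, x j) - x istar) := by
    simp [Matrix.mulVec, dotProduct, Matrix.transpose_apply]
  rw [h2, indicatorVec]
  ring

section Chain
variable (x : Fin d → ℝ) (istar : Fin d)

/-- the normalized sampling vector from state `S`. -/
noncomputable def qv (S : Finset (Fin d)) : Fin d → ℝ := clipNorm (gs x istar S)

/-- one-step transition matrix for our specific instance. -/
noncomputable def T (S S' : Finset (Fin d)) : ℝ :=
  transProb (Matrix.of fun _ : Fin 1 => x) (fun _ => x istar) 1 S S'

lemma T_eq (S S' : Finset (Fin d)) :
    T x istar S S' = ∑ i : Fin d, if ({i} : Finset (Fin d)) = S' then qv x istar S i else 0 := by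
  rw [T, transProb, gradStep_eq, sampleWoR_one, qv]

lemma qv_nonneg (S : Finset (Fin d)) (i : Fin d) : 0 ≤ qv x istar S i :=
  div_nonneg (le_max_right _ _) (Finset.sum_nonneg fun _ _ => le_max_right _ _)

lemma T_nonneg (S S' : Finset (Fin d)) : 0 ≤ T x istar S S' := by
  rw [T_eq]
  exact Finset.sum_nonneg fun i _ => by
    split <;> simp [qv_nonneg]

lemma T_singleton (S : Finset (Fin d)) (i0 : Fin d) :
    T x istar S {i0} = qv x istar S i0 := by
  classical
  rw [T_eq]
  rw [Finset.sum_eq_single i0]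
  · simp
  · intro b _ hb
    simp [Finset.singleton_inj, hb]
  · simp

lemma T_eq_zero (S S' : Finset (Fin d)) (h : S'.card ≠ 1) : T x istar S S' = 0 := by
  rw [T_eq]
  refine Finset.sum_eq_zero fun i _ => ?_
  have : ({i} : Finset (Fin d)) ≠ S' := fun he => h (he ▸ Finset.card_singleton i)
  simp [this]

lemma sum_T (S : Finset (Fin d)) (hZ : 0 < ∑ i, max (gs x istar S i) 0) :
    ∑ S' : Finset (Fin d), T x istar S S' = 1 := by
  classical
  simp_rw [T_eq]
  rw [Finset.sum_comm]
  have : ∀ i : Fin d, (∑ S' : Finset (Fin d),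
      if ({i} : Finset (Fin d)) = S' then qv x istar S i else 0) = qv x istar S i := by
    intro i
    rw [Finset.sum_ite_eq]
    simp
  simp_rw [this, qv, clipNorm, ← Finset.sum_div]
  exact div_self hZ.ne'

lemma gs_empty (i : Fin d) : gs x istar ∅ i = x i * x istar := by
  simp [gs]

lemma gs_sing (j i : Fin d) :
    gs x istar {j} i = (if i = j then 1 else 0) + x i * (x istar - x j) := by
  simp [gs]

lemma qv_pos {S : Finset (Fin d)} {i : Fin d}
    (hZ : 0 < ∑ i', max (gs x istar S i') 0) (hg : 0 < gs x istar S i) :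
    0 < qv x istar S i := by
  have h : qv x istar S i = max (gs x istar S i) 0 / ∑ i', max (gs x istar S i') 0 := rfl
  rw [h]
  exact div_pos (lt_max_of_lt_left hg) hZ

lemma qv_absorb : qv x istar {istar} = fun i => if i = istar then 1 else 0 := by
  classical
  have hmax : ∀ i, max (gs x istar {istar} i) 0 = if i = istar then 1 else 0 := by
    intro i
    have : gs x istar {istar} i = if i = istar then 1 else 0 := by simp [gs]
    rw [this]
    split <;> simp
  funext i
  show max (gs x istar {istar} i) 0 / ∑ i', max (gs x istar {istar} i') 0 = _
  simp only [hmax]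
  rw [Finset.sum_ite_eq' Finset.univ istar fun _ => (1 : ℝ)]
  simp

lemma T_absorb (S' : Finset (Fin d)) :
    T x istar {istar} S' = if S' = {istar} then 1 else 0 := by
  classical
  rw [T_eq, qv_absorb]
  by_cases h : S' = ({istar} : Finset (Fin d))
  · subst h
    rw [Finset.sum_eq_single istar]
    · simp
    · intro b _ hb
      simp [Finset.singleton_inj, hb]
    · simp
  · simp only [h, if_false]
    refine Finset.sum_eq_zero fun i _ => ?_
    by_cases hi : ({i} : Finset (Fin d)) = S'
    · have : i ≠ istar := by
        rintro rfl
        exact h hi.symm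
      simp [hi, this]
    · simp [hi]

lemma T_absorb' : T x istar {istar} {istar} = 1 := by
  rw [T_absorb]
  simp

/-- two-step absorption probability -/
noncomputable def A2 (S : Finset (Fin d)) : ℝ :=
  ∑ S' : Finset (Fin d), T x istar S S' * T x istar S' {istar}

lemma A2_absorb : A2 x istar {istar} = 1 := by
  classical
  rw [A2]
  rw [Finset.sum_eq_single ({istar} : Finset (Fin d))]
  · rw [T_absorb]
    simp
  · intro b _ hb
    rw [T_absorb]
    simp [hb]
  · simp

lemma le_A2 (S S' : Finset (Fin d)) : T x istar S S' * T x istar S' {istar} ≤ A2 x istar S :=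
  Finset.single_le_sum (f := fun S' => T x istar S S' * T x istar S' {istar})
    (fun s _ => mul_nonneg (T_nonneg x istar _ _) (T_nonneg x istar _ _)) (Finset.mem_univ S')

section Event
variable {x istar}
variable (hj0e : ∃ j0, x j0 * x istar < 0) (hxne : ∀ j, j ≠ istar → x j ≠ x istar)

include hj0e in
lemma hx0 : x istar ≠ 0 := by
  obtain ⟨j0, hj0⟩ := hj0e
  intro h
  rw [h, mul_zero] at hj0
  exact lt_irrefl 0 hj0

include hj0e in
lemma Z_empty_pos : 0 < ∑ i, max (gs x istar ∅ i) 0 := by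
  refine Finset.sum_pos' (fun i _ => le_max_right _ _) ⟨istar, Finset.mem_univ _, ?_⟩
  rw [gs_empty]
  have : 0 < x istar * x istar := mul_self_pos.mpr (hx0 hj0e)
  exact lt_max_iff.mpr (Or.inl this)

include hj0e hxne in
lemma Z_sing_pos (j : Fin d) : 0 < ∑ i, max (gs x istar {j} i) 0 := by
  obtain ⟨j0, hj0⟩ := hj0e
  by_cases hji : j = istar
  · subst hji
    refine Finset.sum_pos' (fun i _ => le_max_right _ _) ⟨j, Finset.mem_univ _, ?_⟩
    rw [gs_sing]
    simp
  · have hne : x istar * (x istar - x j) ≠ 0 :=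
      mul_ne_zero (hx0 ⟨j0, hj0⟩) (sub_ne_zero.mpr (Ne.symm (hxne j hji)))
    rcases hne.lt_or_gt with hb | hb
    · -- bad state: escape via j0
      have hjj0 : j0 ≠ j := by
        intro h
        subst h
        nlinarith [sq_nonneg (x istar)]
      refine Finset.sum_pos' (fun i _ => le_max_right _ _) ⟨j0, Finset.mem_univ _, ?_⟩
      rw [gs_sing]
      have hpos : 0 < x j0 * (x istar - x j) := by nlinarith [mul_self_pos.mpr (hx0 ⟨j0, hj0⟩)]
      simp only [hjj0, if_false]
      exact lt_max_iff.mpr (Or.inl (by linarith))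
    · -- good state: go to istar
      refine Finset.sum_pos' (fun i _ => le_max_right _ _) ⟨istar, Finset.mem_univ _, ?_⟩
      rw [gs_sing]
      simp only [Ne.symm hji, if_false]
      exact lt_max_iff.mpr (Or.inl (by linarith))

include hj0e hxne in
lemma A2_pos (S : Finset (Fin d)) (hs : S = ∅ ∨ S.card = 1) : 0 < A2 x istar S := by
  classical
  obtain ⟨j0, hj0⟩ := hj0e
  have hx0' : x istar ≠ 0 := hx0 ⟨j0, hj0⟩
  have hTabs : T x istar {istar} {istar} = 1 := T_absorb' x istar
  rcases hs with rfl | hcard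
  · refine lt_of_lt_of_le ?_ (le_A2 x istar ∅ {istar})
    rw [T_singleton, hTabs, mul_one]
    refine qv_pos x istar (Z_empty_pos ⟨j0, hj0⟩) ?_
    rw [gs_empty]
    exact mul_self_pos.mpr hx0'
  · obtain ⟨j, rfl⟩ := Finset.card_eq_one.mp hcard
    by_cases hji : j = istar
    · subst hji
      rw [A2_absorb]
      norm_num
    · have hb2 : x istar * (x istar - x j) ≠ 0 :=
        mul_ne_zero hx0' (sub_ne_zero.mpr (Ne.symm (hxne j hji)))
      rcases hb2.lt_or_gt with hb | hb
      · -- bad state; escape via j0 then istar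
        have hj0i : j0 ≠ istar := by
          rintro rfl
          nlinarith
        have hjj0 : j0 ≠ j := by
          rintro rfl
          nlinarith [sq_nonneg (x istar)]
        refine lt_of_lt_of_le ?_ (le_A2 x istar {j} {j0})
        have h1 : 0 < qv x istar {j} j0 := by
          refine qv_pos x istar (Z_sing_pos ⟨j0, hj0⟩ hxne j) ?_
          rw [gs_sing]
          have hpos : 0 < x j0 * (x istar - x j) := by
            nlinarith [mul_self_pos.mpr hx0']
          simp only [hjj0, if_false]
          linarith
        have h2 : 0 < qv x istar {j0} istar := by
          refine qv_pos x istar (Z_sing_pos ⟨j0, hj0⟩ hxne j0) ?_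
          rw [gs_sing]
          have : 0 < x istar * (x istar - x j0) := by nlinarith [sq_nonneg (x istar)]
          simp only [Ne.symm hj0i, if_false]
          linarith
        rw [T_singleton, T_singleton]
        exact mul_pos h1 h2
      · -- good state
        refine lt_of_lt_of_le ?_ (le_A2 x istar {j} {istar})
        rw [T_singleton, hTabs, mul_one]
        refine qv_pos x istar (Z_sing_pos ⟨j0, hj0⟩ hxne j) ?_
        rw [gs_sing]
        simp only [Ne.symm hji, if_false]
        linarith

end Event

/-- the chain distribution for our specific instance. -/
noncomputable def C (t : ℕ) (S : Finset (Fin d)) : ℝ :=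
  chainProb (Matrix.of fun _ : Fin 1 => x) (fun _ => x istar) 1 t S

lemma C_zero (S : Finset (Fin d)) : C x istar 0 S = if S = ∅ then 1 else 0 := rfl

lemma C_succ (t : ℕ) (S : Finset (Fin d)) :
    C x istar (t + 1) S = ∑ S' : Finset (Fin d), C x istar t S' * T x istar S' S := rfl

lemma C_nonneg (t : ℕ) (S : Finset (Fin d)) : 0 ≤ C x istar t S := by
  induction t generalizing S with
  | zero => rw [C_zero]; positivity
  | succ t ih =>
    rw [C_succ]
    exact Finset.sum_nonneg fun S' _ => mul_nonneg (ih S') (T_nonneg x istar S' S)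

lemma C_support (t : ℕ) (S : Finset (Fin d)) (h : C x istar t S ≠ 0) :
    S = ∅ ∨ S.card = 1 := by
  cases t with
  | zero =>
    rw [C_zero] at h
    by_cases hS : S = ∅
    · exact Or.inl hS
    · simp [hS] at h
  | succ t =>
    by_cases hc : S.card = 1
    · exact Or.inr hc
    · exfalso
      apply h
      rw [C_succ]
      exact Finset.sum_eq_zero fun S' _ => by rw [T_eq_zero x istar S' S hc, mul_zero]

section Event
variable {x istar}
variable (hj0e : ∃ j0, x j0 * x istar < 0) (hxne : ∀ j, j ≠ istar → x j ≠ x istar)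

include hj0e in
lemma sum_T_empty : ∑ S' : Finset (Fin d), T x istar ∅ S' = 1 :=
  sum_T x istar ∅ (Z_empty_pos hj0e)

include hj0e hxne in
lemma sum_T_sing (j : Fin d) : ∑ S' : Finset (Fin d), T x istar {j} S' = 1 :=
  sum_T x istar {j} (Z_sing_pos hj0e hxne j)

include hj0e hxne in
lemma C_mass (t : ℕ) : ∑ S : Finset (Fin d), C x istar t S = 1 := by
  induction t with
  | zero =>
    simp_rw [C_zero]
    rw [Finset.sum_ite_eq' Finset.univ (∅ : Finset (Fin d)) fun _ => (1 : ℝ)]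
    simp
  | succ t ih =>
    simp_rw [C_succ]
    rw [Finset.sum_comm]
    have : ∀ S' : Finset (Fin d),
        (∑ S : Finset (Fin d), C x istar t S' * T x istar S' S) = C x istar t S' := by
      intro S'
      rw [← Finset.mul_sum]
      by_cases h : C x istar t S' = 0
      · rw [h, zero_mul]
      · rcases C_support x istar t S' h with rfl | hcard
        · rw [sum_T_empty hj0e, mul_one]
        · obtain ⟨j, rfl⟩ := Finset.card_eq_one.mp hcard
          rw [sum_T_sing hj0e hxne j, mul_one]
    simp_rw [this]
    exact ih

include hj0e hxne in
lemma C_le_one (t : ℕ) (S : Finset (Fin d)) : C x istar t S ≤ 1 := by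
  rw [← C_mass hj0e hxne t]
  exact Finset.single_le_sum (fun S' _ => C_nonneg x istar t S') (Finset.mem_univ S)

lemma C_mono (t : ℕ) : C x istar t {istar} ≤ C x istar (t + 1) {istar} := by
  rw [C_succ]
  calc C x istar t {istar} = C x istar t {istar} * T x istar {istar} {istar} := by
        rw [T_absorb', mul_one]
    _ ≤ ∑ S' : Finset (Fin d), C x istar t S' * T x istar S' {istar} :=
        Finset.single_le_sum
          (f := fun S' => C x istar t S' * T x istar S' {istar})
          (fun S' _ => mul_nonneg (C_nonneg x istar t S') (T_nonneg x istar S' {istar}))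
          (Finset.mem_univ ({istar} : Finset (Fin d)))

lemma C_mono_le {s t : ℕ} (h : s ≤ t) : C x istar s {istar} ≤ C x istar t {istar} := by
  induction t with
  | zero => exact Nat.le_zero.mp h ▸ le_refl _
  | succ t ih =>
    rcases Nat.lt_or_ge s (t + 1) with h' | h'
    · exact le_trans (ih (Nat.lt_succ_iff.mp h')) (C_mono t)
    · have : s = t + 1 := le_antisymm h h'
      exact this ▸ le_refl _

lemma C_two_step (t : ℕ) :
    C x istar (t + 2) {istar} = ∑ S : Finset (Fin d), C x istar t S * A2 x istar S := by
  rw [C_succ]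
  simp_rw [C_succ, Finset.sum_mul, A2, Finset.mul_sum]
  rw [Finset.sum_comm]
  simp_rw [mul_assoc]

noncomputable def zeta (x : Fin d → ℝ) (istar : Fin d) : ℝ :=
  min ((insert (∅ : Finset (Fin d)) (Finset.univ.filter fun S => S.card = 1)).inf'
    ⟨∅, Finset.mem_insert_self _ _⟩ (A2 x istar)) (1 / 2)

include hj0e hxne in
lemma zeta_pos : 0 < zeta x istar := by
  refine lt_min ?_ (by norm_num)
  refine (Finset.lt_inf'_iff _).2 ?_
  intro S hs
  refine A2_pos hj0e hxne S ?_
  rcases Finset.mem_insert.mp hs with rfl | hmem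
  · exact Or.inl rfl
  · exact Or.inr (Finset.mem_filter.mp hmem).2

lemma zeta_le_half : zeta x istar ≤ 1 / 2 := min_le_right _ _

lemma zeta_le_A2 (S : Finset (Fin d)) (hs : S = ∅ ∨ S.card = 1) :
    zeta x istar ≤ A2 x istar S := by
  refine le_trans (min_le_left _ _) (Finset.inf'_le _ ?_)
  rcases hs with rfl | hcard
  · exact Finset.mem_insert_self _ _
  · exact Finset.mem_insert_of_mem (Finset.mem_filter.mpr ⟨Finset.mem_univ _, hcard⟩)

include hj0e hxne in
lemma C_contraction (t : ℕ) :
    1 - C x istar (t + 2) {istar} ≤ (1 - zeta x istar) * (1 - C x istar t {istar}) := by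
  classical
  have hmass := C_mass hj0e hxne (t := t)
  have h2 := C_two_step (x := x) (istar := istar) t
  have hsplit := Finset.add_sum_erase Finset.univ
    (fun S => C x istar t S * A2 x istar S) (Finset.mem_univ ({istar} : Finset (Fin d)))
  have hmass_split := Finset.add_sum_erase Finset.univ
    (fun S => C x istar t S) (Finset.mem_univ ({istar} : Finset (Fin d)))
  have hbound : ∑ S ∈ Finset.univ.erase ({istar} : Finset (Fin d)),
      zeta x istar * C x istar t S ≤
      ∑ S ∈ Finset.univ.erase ({istar} : Finset (Fin d)), C x istar t S * A2 x istar S := by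
    refine Finset.sum_le_sum fun S _ => ?_
    by_cases h : C x istar t S = 0
    · rw [h, mul_zero, zero_mul]
    · rw [mul_comm]
      exact mul_le_mul_of_nonneg_left
        (zeta_le_A2 (x := x) (istar := istar) S (C_support x istar t S h))
        (C_nonneg x istar t S)
  rw [← Finset.mul_sum] at hbound
  have herase : ∑ S ∈ Finset.univ.erase ({istar} : Finset (Fin d)), C x istar t S =
      1 - C x istar t {istar} := by linarith [hmass_split, hmass]
  rw [herase] at hbound
  have : C x istar t {istar} + zeta x istar * (1 - C x istar t {istar}) ≤
      C x istar (t + 2) {istar} := by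
    rw [h2, ← hsplit]
    simp only [A2_absorb, mul_one]
    linarith [hbound]
  nlinarith [this]

include hj0e hxne in
lemma C_decay (m : ℕ) : 1 - C x istar (2 * m) {istar} ≤ (1 - zeta x istar) ^ m := by
  induction m with
  | zero =>
    rw [C_zero]
    have : ({istar} : Finset (Fin d)) ≠ ∅ := Finset.singleton_ne_empty istar
    simp [this]
  | succ m ih =>
    have h1 : 2 * (m + 1) = 2 * m + 2 := by ring
    rw [h1]
    calc 1 - C x istar (2 * m + 2) {istar}
        ≤ (1 - zeta x istar) * (1 - C x istar (2 * m) {istar}) :=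
          C_contraction hj0e hxne _
      _ ≤ (1 - zeta x istar) * (1 - zeta x istar) ^ m := by
          refine mul_le_mul_of_nonneg_left ih ?_
          linarith [zeta_le_half (x := x) (istar := istar)]
      _ = (1 - zeta x istar) ^ (m + 1) := by ring

include hj0e hxne in
lemma final_bound : ∃ ζ : ℝ, 0 < ζ ∧ ζ < 1 ∧ ∀ t : ℕ,
    2 * Real.log 2 / (-Real.log (1 - ζ)) ≤ (t : ℝ) → 3 / 4 ≤ C x istar t {istar} := by
  set r : ℝ := 1 - zeta x istar with hr
  have hz1 : 0 < zeta x istar := zeta_pos hj0e hxne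
  have hz2 : zeta x istar ≤ 1 / 2 := zeta_le_half (x := x) (istar := istar)
  have hr1 : r < 1 := by simp only [hr]; linarith
  have hr2 : (1 : ℝ) / 2 ≤ r := by simp only [hr]; linarith
  have hr0 : 0 < r := by linarith
  have hlogr_neg : Real.log r < 0 := Real.log_neg hr0 hr1
  set L : ℝ := -Real.log r with hL
  have hLpos : 0 < L := by simp only [hL]; linarith
  have hLle : L ≤ Real.log 2 := by
    have : Real.log (1 / 2) ≤ Real.log r := Real.log_le_log (by norm_num) hr2
    rw [Real.log_div one_ne_zero two_ne_zero, Real.log_one] at this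
    simp only [hL]
    linarith
  have hlog2 : 0 < Real.log 2 := Real.log_pos (by norm_num)
  refine ⟨1 - Real.exp (Real.log r / 8), ?_, ?_, ?_⟩
  · have : Real.exp (Real.log r / 8) < 1 := by
      rw [Real.exp_lt_one_iff]
      linarith
    linarith
  · have : 0 < Real.exp (Real.log r / 8) := Real.exp_pos _
    linarith
  · intro t ht
    have hsub : 1 - (1 - Real.exp (Real.log r / 8)) = Real.exp (Real.log r / 8) := by ring
    rw [hsub, Real.log_exp] at ht
    have hthr : 2 * Real.log 2 / (-(Real.log r / 8)) = 16 * Real.log 2 / L := by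
      rw [hL, ← neg_div, div_div_eq_mul_div]
      have h16 : (2:ℝ) * Real.log 2 * 8 = 16 * Real.log 2 := by ring
      rw [h16]
    rw [hthr] at ht
    have htL : 16 * Real.log 2 ≤ (t : ℝ) * L := by
      rw [div_le_iff₀ hLpos] at ht
      linarith
    set m : ℕ := t / 2 with hm
    have hmt : 2 * m ≤ t := Nat.mul_div_le t 2
    have hmt' : (t : ℝ) ≤ 2 * (m : ℝ) + 1 := by
      have : t ≤ 2 * m + 1 := by omega
      exact_mod_cast this
    have hmL : 2 * Real.log 2 ≤ (m : ℝ) * L := by nlinarith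
    have hdecay := C_decay hj0e hxne m
    have hpow : r ^ m ≤ 1 / 4 := by
      have h1 : r ^ m = Real.exp ((m : ℝ) * Real.log r) := by
        rw [Real.exp_nat_mul, Real.exp_log hr0]
      have h2 : (m : ℝ) * Real.log r ≤ -(2 * Real.log 2) := by
        have : (m : ℝ) * L = -((m : ℝ) * Real.log r) := by rw [hL]; ring
        linarith
      have h3 : Real.exp (-(2 * Real.log 2)) = 1 / 4 := by
        rw [Real.exp_neg, two_mul, Real.exp_add, Real.exp_log two_pos]
        norm_num
      calc r ^ m = Real.exp ((m : ℝ) * Real.log r) := h1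
        _ ≤ Real.exp (-(2 * Real.log 2)) := Real.exp_le_exp.mpr h2
        _ = 1 / 4 := h3
    have hmono := C_mono_le (x := x) (istar := istar) hmt
    have hfin : 1 - C x istar t {istar} ≤ 1 / 4 := by
      calc 1 - C x istar t {istar} ≤ 1 - C x istar (2 * m) {istar} := by linarith
        _ ≤ r ^ m := hdecay
        _ ≤ 1 / 4 := hpow
    linarith

end Event
end Chain

/- ### Majority vote convergence -/

lemma countVotes_le {N : ℕ} (g : Fin N → Finset (Fin d)) (S : Finset (Fin d)) :
    countVotes g S ≤ N := by
  classical
  calc countVotes g S ≤ (Finset.univ : Finset (Fin N)).card := Finset.card_filter_le _ _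
    _ = N := by simp

lemma plurality_wins {N : ℕ} (g : Fin N → Finset (Fin d)) (Sstar V : Finset (Fin d))
    (hvote : ∀ S, countVotes g S ≤ countVotes g V) (h : N < 2 * countVotes g Sstar) :
    V = Sstar := by
  classical
  by_contra hne
  have h1 : countVotes g Sstar ≤ countVotes g V := hvote _
  have hdisj : Disjoint (Finset.univ.filter fun j => g j = Sstar)
      (Finset.univ.filter fun j => g j = V) := by
    rw [Finset.disjoint_left]
    intro a ha hb
    rw [Finset.mem_filter] at ha hb
    exact hne (hb.2 ▸ ha.2 ▸ rfl)
  have hcard := Finset.card_union_of_disjoint hdisj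
  have hle : ((Finset.univ.filter fun j => g j = Sstar) ∪
      (Finset.univ.filter fun j => g j = V)).card ≤ N := by
    calc _ ≤ (Finset.univ : Finset (Fin N)).card := Finset.card_le_card (Finset.subset_univ _)
      _ = N := by simp
  rw [hcard] at hle
  unfold countVotes at h1 h
  omega

lemma sum_prod_pow (N : ℕ) (h : Finset (Fin d) → ℝ) :
    ∑ g : Fin N → Finset (Fin d), ∏ j, h (g j) = (∑ S, h S) ^ N := by
  classical
  have key := Finset.prod_univ_sum (fun _ : Fin N => (Finset.univ : Finset (Finset (Fin d))))
    (fun _ S => h S)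
  rw [Fintype.piFinset_univ] at key
  rw [← key, Finset.prod_const, Finset.card_univ, Fintype.card_fin]

lemma prod_alpha {N : ℕ} (Sstar : Finset (Fin d)) (g : Fin N → Finset (Fin d)) :
    (∏ j, (if g j = Sstar then (1 : ℝ) else 2)) = 2 ^ (N - countVotes g Sstar) := by
  classical
  rw [Finset.prod_ite]
  rw [Finset.prod_const, Finset.prod_const]
  have hcard := Finset.card_filter_add_card_filter_not
    (s := (Finset.univ : Finset (Fin N))) (p := fun j => g j = Sstar)
  simp only [Finset.card_univ, Fintype.card_fin] at hcard
  have : (Finset.univ.filter fun j => ¬ g j = Sstar).card = N - countVotes g Sstar := by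
    unfold countVotes
    omega
  rw [this, one_pow, one_mul]

lemma tail_bound (Sstar : Finset (Fin d)) (f : Finset (Fin d) → ℝ)
    (h0 : ∀ S, 0 ≤ f S) (h1 : ∑ S, f S = 1) (hp : 3 / 4 ≤ f Sstar) (N : ℕ) :
    ∑ g : Fin N → Finset (Fin d),
      (∏ j, f (g j)) * (if 2 * countVotes g Sstar ≤ N then (1 : ℝ) else 0) ≤
      (5 / (4 * Real.sqrt 2)) ^ N := by
  classical
  have hsqrt2 : (0 : ℝ) < Real.sqrt 2 := Real.sqrt_pos.mpr (by norm_num)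
  have hsq : Real.sqrt 2 ^ 2 = 2 := Real.sq_sqrt (by norm_num)
  have hone : (1 : ℝ) ≤ Real.sqrt 2 := by nlinarith
  have hstep : ∀ g : Fin N → Finset (Fin d),
      (∏ j, f (g j)) * (if 2 * countVotes g Sstar ≤ N then (1 : ℝ) else 0) ≤
      (∏ j, f (g j)) * ((2 : ℝ) ^ (N - countVotes g Sstar) / Real.sqrt 2 ^ N) := by
    intro g
    have hprod : 0 ≤ ∏ j, f (g j) := Finset.prod_nonneg fun j _ => h0 _
    by_cases hc : 2 * countVotes g Sstar ≤ N
    · simp only [hc, if_true, mul_one]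
      refine le_mul_of_one_le_right hprod ?_
      rw [le_div_iff₀ (by positivity), one_mul]
      have hcN : countVotes g Sstar ≤ N := countVotes_le g Sstar
      have h2c : N ≤ 2 * (N - countVotes g Sstar) := by omega
      calc Real.sqrt 2 ^ N ≤ Real.sqrt 2 ^ (2 * (N - countVotes g Sstar)) :=
            pow_le_pow_right₀ hone h2c
        _ = (Real.sqrt 2 ^ 2) ^ (N - countVotes g Sstar) := by rw [← pow_mul]
        _ = 2 ^ (N - countVotes g Sstar) := by rw [hsq]
    · simp only [hc, if_false, mul_zero]
      positivity
  refine le_trans (Finset.sum_le_sum fun g _ => hstep g) ?_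
  have hswap : ∀ g : Fin N → Finset (Fin d),
      (∏ j, f (g j)) * ((2 : ℝ) ^ (N - countVotes g Sstar) / Real.sqrt 2 ^ N) =
      (∏ j, f (g j) * (if g j = Sstar then (1 : ℝ) else 2)) / Real.sqrt 2 ^ N := by
    intro g
    rw [Finset.prod_mul_distrib, prod_alpha Sstar g, mul_div_assoc]
  simp_rw [hswap]
  rw [← Finset.sum_div]
  have hkey : ∑ g : Fin N → Finset (Fin d),
      ∏ j, f (g j) * (if g j = Sstar then (1 : ℝ) else 2) =
      (∑ S, f S * (if S = Sstar then (1 : ℝ) else 2)) ^ N :=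
    sum_prod_pow N (fun S => f S * (if S = Sstar then (1 : ℝ) else 2))
  rw [hkey]
  have hval : ∑ S, f S * (if S = Sstar then (1 : ℝ) else 2) = 2 - f Sstar := by
    have : ∀ S, f S * (if S = Sstar then (1 : ℝ) else 2) =
        2 * f S - f S * (if S = Sstar then (1 : ℝ) else 0) := by
      intro S
      split <;> ring
    simp_rw [this]
    rw [Finset.sum_sub_distrib, ← Finset.mul_sum, h1]
    simp_rw [mul_ite, mul_one, mul_zero]
    rw [Finset.sum_ite_eq' Finset.univ Sstar f]
    simp
  rw [hval]
  have hfS1 : f Sstar ≤ 1 := by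
    rw [← h1]
    exact Finset.single_le_sum (fun S _ => h0 S) (Finset.mem_univ Sstar)
  have hbase : (0 : ℝ) ≤ 2 - f Sstar := by linarith
  have hbase2 : 2 - f Sstar ≤ 5 / 4 := by linarith
  calc (2 - f Sstar) ^ N / Real.sqrt 2 ^ N ≤ (5 / 4 : ℝ) ^ N / Real.sqrt 2 ^ N := by
        apply div_le_div_of_nonneg_right (pow_le_pow_left₀ hbase hbase2 N) (by positivity)
      _ = (5 / (4 * Real.sqrt 2)) ^ N := by
        rw [← div_pow]
        congr 1
        field_simp

lemma mv_tendsto (Sstar : Finset (Fin d)) (f : Finset (Fin d) → ℝ)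
    (h0 : ∀ S, 0 ≤ f S) (h1 : ∑ S, f S = 1) (hp : 3 / 4 ≤ f Sstar)
    (vote : (N : ℕ) → (Fin N → Finset (Fin d)) → Finset (Fin d))
    (hvote : ∀ (N : ℕ) (g : Fin N → Finset (Fin d)) (S : Finset (Fin d)),
      countVotes g S ≤ countVotes g (vote N g)) :
    Filter.Tendsto (fun N : ℕ => mvRecoverProb f N (vote N) Sstar)
      Filter.atTop (nhds 1) := by
  classical
  set c0 : ℝ := 5 / (4 * Real.sqrt 2) with hc0def
  have hsqrt2 : (0 : ℝ) < Real.sqrt 2 := Real.sqrt_pos.mpr (by norm_num)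
  have hsq : Real.sqrt 2 ^ 2 = 2 := Real.sq_sqrt (by norm_num)
  have hc0 : (0 : ℝ) ≤ c0 := by positivity
  have hc01 : c0 < 1 := by
    rw [hc0def, div_lt_one (by positivity)]
    nlinarith
  have hup : ∀ N : ℕ, mvRecoverProb f N (vote N) Sstar ≤ 1 := by
    intro N
    rw [mvRecoverProb]
    calc ∑ g : Fin N → Finset (Fin d), (∏ j, f (g j)) * (if vote N g = Sstar then (1:ℝ) else 0)
        ≤ ∑ g : Fin N → Finset (Fin d), ∏ j, f (g j) := by
          refine Finset.sum_le_sum fun g _ => ?_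
          have hprod : 0 ≤ ∏ j, f (g j) := Finset.prod_nonneg fun j _ => h0 _
          by_cases h : vote N g = Sstar
          · simp [h]
          · simp [h, hprod]
      _ = 1 := by rw [sum_prod_pow N f, h1, one_pow]
  have hlow : ∀ N : ℕ, 1 - c0 ^ N ≤ mvRecoverProb f N (vote N) Sstar := by
    intro N
    have htail := tail_bound Sstar f h0 h1 hp N
    have key : ∀ g : Fin N → Finset (Fin d),
        (∏ j, f (g j)) - (∏ j, f (g j)) * (if 2 * countVotes g Sstar ≤ N then (1:ℝ) else 0) ≤
        (∏ j, f (g j)) * (if vote N g = Sstar then (1:ℝ) else 0) := by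
      intro g
      have hprod : 0 ≤ ∏ j, f (g j) := Finset.prod_nonneg fun j _ => h0 _
      by_cases h : 2 * countVotes g Sstar ≤ N
      · simp only [h, if_true, mul_one, sub_self]
        by_cases h2 : vote N g = Sstar <;> simp [h2, hprod]
      · have hN : N < 2 * countVotes g Sstar := by omega
        have hisvote := plurality_wins g Sstar (vote N g) (hvote N g) hN
        simp [h, hisvote]
    have hsum : 1 - (∑ g : Fin N → Finset (Fin d),
        (∏ j, f (g j)) * (if 2 * countVotes g Sstar ≤ N then (1:ℝ) else 0)) ≤
        mvRecoverProb f N (vote N) Sstar := by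
      rw [mvRecoverProb]
      have := Finset.sum_le_sum fun g (_ : g ∈ Finset.univ) => key g
      rw [Finset.sum_sub_distrib, sum_prod_pow N f, h1, one_pow] at this
      exact this
    linarith
  have hpow : Filter.Tendsto (fun N : ℕ => c0 ^ N) Filter.atTop (nhds 0) :=
    tendsto_pow_atTop_nhds_zero_of_lt_one hc0 hc01
  have hg : Filter.Tendsto (fun N : ℕ => 1 - c0 ^ N) Filter.atTop (nhds 1) := by
    have h1' : Filter.Tendsto (fun _ : ℕ => (1 : ℝ)) Filter.atTop (nhds 1) := tendsto_const_nhds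
    simpa using h1'.sub hpow
  exact tendsto_of_tendsto_of_tendsto_of_le_of_le hg tendsto_const_nhds hlow hup

/- ### Measure estimates -/

lemma gaussian_neg_invariant :
    (gaussianReal 0 1).map (fun a => -a) = gaussianReal 0 1 := by
  have h := gaussianReal_map_const_mul (μ := 0) (v := 1) (-1)
  have hfun : (fun a : ℝ => -1 * a) = fun a : ℝ => -a := by funext a; ring
  rw [hfun] at h
  convert h using 2
  · ring
  · ext
    norm_num

lemma gaussian_singleton (a : ℝ) : gaussianReal 0 1 {a} = 0 :=
  gaussianReal_absolutelyContinuous 0 (v := 1) one_ne_zero Real.volume_singleton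

lemma gaussian_Ici : gaussianReal 0 1 (Set.Ici 0) = 2⁻¹ := by
  have hIoi : gaussianReal 0 1 (Set.Iio 0) = gaussianReal 0 1 (Set.Ioi 0) := by
    conv_lhs => rw [← gaussian_neg_invariant]
    rw [Measure.map_apply measurable_neg measurableSet_Iio]
    congr 1
    ext a
    simp
  have hIci : gaussianReal 0 1 (Set.Ici 0) = gaussianReal 0 1 (Set.Ioi 0) := by
    refine le_antisymm ?_ (measure_mono Set.Ioi_subset_Ici_self)
    have h1 : Set.Ici (0:ℝ) ⊆ Set.Ioi 0 ∪ {0} := by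
      intro a ha
      rcases eq_or_lt_of_le (Set.mem_Ici.mp ha) with h | h
      · exact Or.inr (by simp [← h])
      · exact Or.inl h
    calc gaussianReal 0 1 (Set.Ici 0) ≤ gaussianReal 0 1 (Set.Ioi 0 ∪ {0}) := measure_mono h1
      _ ≤ gaussianReal 0 1 (Set.Ioi 0) + gaussianReal 0 1 {0} := measure_union_le _ _
      _ = gaussianReal 0 1 (Set.Ioi 0) := by rw [gaussian_singleton, add_zero]
  have hdisj : Disjoint (Set.Ici (0:ℝ)) (Set.Iio 0) := by
    rw [Set.disjoint_left]
    intro a ha hb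
    simp only [Set.mem_Ici] at ha
    simp only [Set.mem_Iio] at hb
    linarith
  have huniv : gaussianReal 0 1 (Set.Ici 0) + gaussianReal 0 1 (Set.Iio 0) = 1 := by
    rw [← measure_union hdisj measurableSet_Iio, Set.union_comm, Set.Iio_union_Ici]
    simp
  rw [hIoi, ← hIci] at huniv
  have h2 : (2 : ℝ≥0∞) * gaussianReal 0 1 (Set.Ici 0) = 1 := by rw [two_mul]; exact huniv
  have h3 := congrArg (fun z => (2 : ℝ≥0∞)⁻¹ * z) h2
  simp only [mul_one] at h3
  rw [← mul_assoc, ENNReal.inv_mul_cancel (by norm_num) (by norm_num), one_mul] at h3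
  exact h3

lemma gaussian_Iic : gaussianReal 0 1 (Set.Iic 0) = 2⁻¹ := by
  conv_lhs => rw [← gaussian_neg_invariant]
  rw [Measure.map_apply measurable_neg measurableSet_Iic]
  have : (fun a : ℝ => -a) ⁻¹' (Set.Iic 0) = Set.Ici 0 := by
    ext a
    simp
  rw [this, gaussian_Ici]

lemma measure_eval_zero (istar : Fin d) :
    (Measure.pi fun _ : Fin d => gaussianReal 0 1) {x : Fin d → ℝ | x istar = 0} = 0 := by
  classical
  have hset : {x : Fin d → ℝ | x istar = 0} =
      Set.pi Set.univ (fun i => if i = istar then ({0} : Set ℝ) else Set.univ) := by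
    ext x
    simp only [Set.mem_setOf_eq, Set.mem_pi, Set.mem_univ, true_implies]
    constructor
    · intro h i
      by_cases hi : i = istar
      · subst hi; simp [h]
      · simp [hi]
    · intro h
      have := h istar
      simpa using this
  rw [hset, Measure.pi_pi]
  refine Finset.prod_eq_zero (Finset.mem_univ istar) ?_
  simp [gaussian_singleton]

lemma measure_eq_coords_zero (j istar : Fin d) (hji : j ≠ istar) :
    (Measure.pi fun _ : Fin d => gaussianReal 0 1) {x : Fin d → ℝ | x j = x istar} = 0 := by
  classical
  have hmeas : Measurable (fun x : Fin d → ℝ => (x j, x istar)) :=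
    (measurable_pi_apply j).prodMk (measurable_pi_apply istar)
  have hdiag : MeasurableSet {p : ℝ × ℝ | p.1 = p.2} :=
    measurableSet_eq_fun measurable_fst measurable_snd
  have hmap : (Measure.pi fun _ : Fin d => gaussianReal 0 1).map
      (fun x : Fin d → ℝ => (x j, x istar)) = (gaussianReal 0 1).prod (gaussianReal 0 1) := by
    refine (Measure.prod_eq fun s t hs ht => ?_).symm
    rw [Measure.map_apply hmeas (hs.prod ht)]
    have hpre : (fun x : Fin d → ℝ => (x j, x istar)) ⁻¹' (s ×ˢ t) =
        Set.pi Set.univ (fun i => if i = j then s else if i = istar then t else Set.univ) := by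
      ext x
      simp only [Set.mem_preimage, Set.mem_prod, Set.mem_pi, Set.mem_univ, true_implies]
      constructor
      · rintro ⟨h1, h2⟩ i
        by_cases hij : i = j
        · subst hij; simp [h1]
        · by_cases hii : i = istar
          · subst hii; simp [hij, h2]
          · simp [hij, hii]
      · intro h
        constructor
        · have := h j; simpa using this
        · have := h istar
          simp only [hji.symm, if_false, if_neg] at this
          simpa [if_neg (Ne.symm hji)] using this
    rw [hpre, Measure.pi_pi]
    rw [← Finset.mul_prod_erase Finset.univ _ (Finset.mem_univ j)]
    rw [← Finset.mul_prod_erase (Finset.univ.erase j) _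
      (Finset.mem_erase.mpr ⟨Ne.symm hji, Finset.mem_univ istar⟩)]
    have hrest : ∀ i ∈ (Finset.univ.erase j).erase istar,
        (gaussianReal 0 1) (if i = j then s else if i = istar then t else Set.univ) = 1 := by
      intro i hi
      rw [Finset.mem_erase] at hi
      obtain ⟨hi1, hi2⟩ := hi
      rw [Finset.mem_erase] at hi2
      simp [hi1, hi2.1]
    rw [Finset.prod_congr rfl hrest]
    simp [if_neg (Ne.symm hji)]
  have hset : {x : Fin d → ℝ | x j = x istar} =
      (fun x : Fin d → ℝ => (x j, x istar)) ⁻¹' {p : ℝ × ℝ | p.1 = p.2} := rfl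
  rw [hset, ← Measure.map_apply hmeas hdiag, hmap]
  rw [Measure.prod_apply (μ := gaussianReal 0 1) (ν := gaussianReal 0 1) hdiag]
  have hzero : ∀ a : ℝ, (gaussianReal 0 1) (Prod.mk a ⁻¹' {p : ℝ × ℝ | p.1 = p.2}) = 0 := by
    intro a
    have h5 : (Prod.mk a ⁻¹' {p : ℝ × ℝ | p.1 = p.2}) = {a} := by
      ext b
      simp [eq_comm]
    rw [h5]
    exact gaussian_singleton a
  calc (∫⁻ a, (gaussianReal 0 1) (Prod.mk a ⁻¹' {p : ℝ × ℝ | p.1 = p.2}) ∂(gaussianReal 0 1))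
      = ∫⁻ _, 0 ∂(gaussianReal 0 1) := lintegral_congr fun a => hzero a
    _ = 0 := lintegral_zero

lemma measure_bad_le (hd : 1 ≤ d) (istar : Fin d) :
    (Measure.pi fun _ : Fin d => gaussianReal 0 1)
      {x : Fin d → ℝ | ¬((∃ j, x j * x istar < 0) ∧ (∀ j, j ≠ istar → x j ≠ x istar))} ≤
      ENNReal.ofReal (1 / 2 ^ (d - 1)) := by
  classical
  set μ := (Measure.pi fun _ : Fin d => gaussianReal 0 1) with hμ
  set A : Set (Fin d → ℝ) := {x | ∀ i, 0 ≤ x i} with hA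
  set B : Set (Fin d → ℝ) := {x | ∀ i, x i ≤ 0} with hB
  set U : Set (Fin d → ℝ) :=
    {x | x istar = 0} ∪ ⋃ j : Fin d, {x : Fin d → ℝ | j ≠ istar ∧ x j = x istar} with hU
  have hUnull : μ U = 0 := by
    rw [hU]
    refine measure_union_null (measure_eval_zero istar) (measure_iUnion_null fun j => ?_)
    by_cases hji : j = istar
    · have : {x : Fin d → ℝ | j ≠ istar ∧ x j = x istar} = ∅ := by
        ext x
        simp [hji]
      rw [this]
      simp
    · refine measure_mono_null (fun x hx => hx.2) (measure_eq_coords_zero j istar hji)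
  have hsub : {x : Fin d → ℝ | ¬((∃ j, x j * x istar < 0) ∧
      (∀ j, j ≠ istar → x j ≠ x istar))} ⊆ A ∪ B ∪ U := by
    intro x hx
    simp only [Set.mem_setOf_eq, not_and_or] at hx
    rcases hx with hP | hQ
    · push_neg at hP
      rcases lt_trichotomy (x istar) 0 with hs | hs | hs
      · refine Or.inl (Or.inr fun i => ?_)
        have := hP i
        nlinarith
      · exact Or.inr (Or.inl hs)
      · refine Or.inl (Or.inl fun i => ?_)
        have := hP i
        nlinarith
    · push_neg at hQ
      obtain ⟨j, hj1, hj2⟩ := hQ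
      exact Or.inr (Or.inr (Set.mem_iUnion.mpr ⟨j, hj1, hj2⟩))
  have hAval : μ A = 2⁻¹ ^ d := by
    have : A = Set.pi Set.univ (fun _ : Fin d => Set.Ici (0:ℝ)) := by
      ext x
      simp [hA, Set.mem_pi, Pi.le_def]
    rw [this, hμ, Measure.pi_pi]
    simp [gaussian_Ici]
  have hBval : μ B = 2⁻¹ ^ d := by
    have : B = Set.pi Set.univ (fun _ : Fin d => Set.Iic (0:ℝ)) := by
      ext x
      simp [hB, Set.mem_pi, Pi.le_def]
    rw [this, hμ, Measure.pi_pi]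
    simp [gaussian_Iic]
  have hbound : μ {x : Fin d → ℝ | ¬((∃ j, x j * x istar < 0) ∧
      (∀ j, j ≠ istar → x j ≠ x istar))} ≤ 2⁻¹ ^ d + 2⁻¹ ^ d := by
    calc μ _ ≤ μ (A ∪ B ∪ U) := measure_mono hsub
      _ ≤ μ (A ∪ B) + μ U := measure_union_le _ _
      _ = μ (A ∪ B) := by rw [hUnull, add_zero]
      _ ≤ μ A + μ B := measure_union_le _ _
      _ = 2⁻¹ ^ d + 2⁻¹ ^ d := by rw [hAval, hBval]
  refine le_trans hbound ?_
  have hofReal : ENNReal.ofReal (1 / 2 ^ (d - 1)) = (2⁻¹ : ℝ≥0∞) ^ (d - 1) := by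
    rw [one_div, ← inv_pow]
    rw [ENNReal.ofReal_pow (by norm_num)]
    congr 1
    rw [ENNReal.ofReal_inv_of_pos (by norm_num)]
    norm_num
  rw [hofReal]
  obtain ⟨k, rfl⟩ : ∃ k, d = k + 1 := ⟨d - 1, by omega⟩
  have hd1 : (k + 1) - 1 = k := by omega
  rw [hd1]
  have h22 : (2 : ℝ≥0∞) * 2⁻¹ = 1 := ENNReal.mul_inv_cancel (by norm_num) (by norm_num)
  have hsum : (2⁻¹ : ℝ≥0∞) ^ (k + 1) + 2⁻¹ ^ (k + 1) = (2 * 2⁻¹) * 2⁻¹ ^ k := by ring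
  rw [hsum, h22, one_mul]

end Stmt11Aux

theorem stmt11 (d : ℕ) (hd : 1 < d) (Sstar : Finset (Fin d)) (hS : Sstar.card = 1) :
    1 - ENNReal.ofReal (1 / 2 ^ (d - 1)) ≤
      (Measure.pi fun _ : Fin d => gaussianReal 0 1)
        {x : Fin d → ℝ |
          ∃ ζ : ℝ, 0 < ζ ∧ ζ < 1 ∧
            ∀ t : ℕ, 2 * Real.log 2 / (-Real.log (1 - ζ)) ≤ (t : ℝ) →
              ∀ vote : (N : ℕ) → (Fin N → Finset (Fin d)) → Finset (Fin d),
                (∀ (N : ℕ) (g : Fin N → Finset (Fin d)) (S : Finset (Fin d)),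
                  countVotes g S ≤ countVotes g (vote N g)) →
                Filter.Tendsto
                  (fun N : ℕ =>
                    mvRecoverProb
                      (chainProb (Matrix.of fun _ : Fin 1 => x)
                        (fun _ : Fin 1 => x ⬝ᵥ indicatorVec Sstar) 1 t)
                      N (vote N) Sstar)
                  Filter.atTop (nhds 1)} := by
  classical
  obtain ⟨istar, hSs⟩ := Finset.card_eq_one.mp hS
  subst hSs
  set μ := (Measure.pi fun _ : Fin d => gaussianReal 0 1) with hμ
  set Target : Set (Fin d → ℝ) := {x : Fin d → ℝ |
          ∃ ζ : ℝ, 0 < ζ ∧ ζ < 1 ∧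
            ∀ t : ℕ, 2 * Real.log 2 / (-Real.log (1 - ζ)) ≤ (t : ℝ) →
              ∀ vote : (N : ℕ) → (Fin N → Finset (Fin d)) → Finset (Fin d),
                (∀ (N : ℕ) (g : Fin N → Finset (Fin d)) (S : Finset (Fin d)),
                  countVotes g S ≤ countVotes g (vote N g)) →
                Filter.Tendsto
                  (fun N : ℕ =>
                    mvRecoverProb
                      (chainProb (Matrix.of fun _ : Fin 1 => x)
                        (fun _ : Fin 1 => x ⬝ᵥ indicatorVec ({istar} : Finset (Fin d))) 1 t)
                      N (vote N) {istar})
                  Filter.atTop (nhds 1)} with hTarget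
  have hsubset : {x : Fin d → ℝ | (∃ j, x j * x istar < 0) ∧
      (∀ j, j ≠ istar → x j ≠ x istar)} ⊆ Target := by
    intro x hx
    obtain ⟨hj0e, hxne⟩ := hx
    obtain ⟨ζ, hζ0, hζ1, hbound⟩ := Stmt11Aux.final_bound hj0e hxne
    refine ⟨ζ, hζ0, hζ1, ?_⟩
    intro t ht vote hvote
    have hy : (fun _ : Fin 1 => x ⬝ᵥ indicatorVec ({istar} : Finset (Fin d))) =
        (fun _ : Fin 1 => x istar) := by
      funext k
      simp [dotProduct, indicatorVec]
    rw [hy]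
    exact Stmt11Aux.mv_tendsto {istar} (Stmt11Aux.C x istar t)
      (fun S => Stmt11Aux.C_nonneg x istar t S) (Stmt11Aux.C_mass hj0e hxne t)
      (hbound t ht) vote hvote
  have hbad := Stmt11Aux.measure_bad_le (d := d) (by omega) istar
  have hcover : (1 : ℝ≥0∞) ≤ μ {x : Fin d → ℝ | (∃ j, x j * x istar < 0) ∧
      (∀ j, j ≠ istar → x j ≠ x istar)} + ENNReal.ofReal (1 / 2 ^ (d - 1)) := by
    have huniv : μ Set.univ = 1 := measure_univ
    have hcup : {x : Fin d → ℝ | (∃ j, x j * x istar < 0) ∧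
        (∀ j, j ≠ istar → x j ≠ x istar)} ∪
        {x : Fin d → ℝ | ¬((∃ j, x j * x istar < 0) ∧
        (∀ j, j ≠ istar → x j ≠ x istar))} = Set.univ := by
      ext x
      simp only [Set.mem_union, Set.mem_setOf_eq, Set.mem_univ, iff_true]
      tauto
    calc (1 : ℝ≥0∞) = μ Set.univ := huniv.symm
      _ = μ _ := by rw [← hcup]
      _ ≤ μ {x : Fin d → ℝ | (∃ j, x j * x istar < 0) ∧
          (∀ j, j ≠ istar → x j ≠ x istar)} +
          μ {x : Fin d → ℝ | ¬((∃ j, x j * x istar < 0) ∧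
          (∀ j, j ≠ istar → x j ≠ x istar))} := measure_union_le _ _
      _ ≤ _ + ENNReal.ofReal (1 / 2 ^ (d - 1)) := add_le_add_right hbad _
  calc 1 - ENNReal.ofReal (1 / 2 ^ (d - 1)) ≤
      μ {x : Fin d → ℝ | (∃ j, x j * x istar < 0) ∧ (∀ j, j ≠ istar → x j ≠ x istar)} :=
        tsub_le_iff_right.mpr hcover
    _ ≤ μ Target := measure_mono hsubset
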